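/- Let R be a commutative ring and f = (f_1,…,f_k) an R-regular sequence. Then the Koszul complex K•(f) on f is a resolution of R/(f_1,…,f_k): its homology vanishes in all degrees except degree 0, where it equals R/(f_1,…,f_k). -/

import Mathlib

open ExteriorAlgebra

namespace KoszulStmt19

variable {R : Type*} [CommRing R]

section Bridge

variable {M N : Type*} [AddCommGroup M] [Module R M] [AddCommGroup N] [Module R N]

lemma contract_ι (φ : Module.Dual R M) (m : M) :
    CliffordAlgebra.contractLeft φ (ι R m) = algebraMap R (ExteriorAlgebra R M) (φ m) :=
  CliffordAlgebra.contractLeft_ι _ _ _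

lemma contract_algebraMap (φ : Module.Dual R M) (r : R) :
    CliffordAlgebra.contractLeft φ (algebraMap R (ExteriorAlgebra R M) r) = 0 :=
  CliffordAlgebra.contractLeft_algebraMap _ _ _

lemma contract_ι_mul (φ : Module.Dual R M) (m : M) (x : ExteriorAlgebra R M) :
    CliffordAlgebra.contractLeft φ (ι R m * x) =
      φ m • x - ι R m * CliffordAlgebra.contractLeft φ x :=
  CliffordAlgebra.contractLeft_ι_mul _ _ _

lemma contract_mem_pow_zero (φ : Module.Dual R M) (x : ExteriorAlgebra R M)
    (hx : x ∈ (LinearMap.range (ι R : M →ₗ[R] ExteriorAlgebra R M)) ^ 0) :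
    CliffordAlgebra.contractLeft φ x = 0 := by
  rw [pow_zero] at hx
  obtain ⟨r, rfl⟩ := Submodule.mem_one.mp hx
  exact contract_algebraMap φ r

lemma contract_mem_pow (φ : Module.Dual R M) {i : ℕ} {x : ExteriorAlgebra R M}
    (hx : x ∈ (LinearMap.range (ι R : M →ₗ[R] ExteriorAlgebra R M)) ^ i) :
    CliffordAlgebra.contractLeft φ x
      ∈ ((LinearMap.range (ι R : M →ₗ[R] ExteriorAlgebra R M)) ^ (i - 1)) := by
  induction hx using Submodule.pow_induction_on_left' with
  | algebraMap r => rw [contract_algebraMap]; exact zero_mem _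
  | add x y i hx hy ihx ihy => rw [map_add]; exact add_mem ihx ihy
  | mem_mul m hm i x hx ih =>
    obtain ⟨v, rfl⟩ := hm
    rw [contract_ι_mul]
    refine sub_mem (Submodule.smul_mem _ _ hx) ?_
    match i with
    | 0 => rw [contract_mem_pow_zero φ x hx, mul_zero]; exact zero_mem _
    | j + 1 =>
      rw [Nat.succ_sub_one] at ih ⊢
      rw [pow_succ']
      exact Submodule.mul_mem_mul (LinearMap.mem_range_self _ v) ih

lemma map_mem_pow (g : M →ₗ[R] N) {i : ℕ} {x : ExteriorAlgebra R M}
    (hx : x ∈ (LinearMap.range (ι R : M →ₗ[R] ExteriorAlgebra R M)) ^ i) :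
    map g x ∈ (LinearMap.range (ι R : N →ₗ[R] ExteriorAlgebra R N)) ^ i := by
  induction hx using Submodule.pow_induction_on_left' with
  | algebraMap r => rw [AlgHom.commutes]; exact Submodule.algebraMap_mem r
  | add x y i hx hy ihx ihy => rw [map_add]; exact add_mem ihx ihy
  | mem_mul m hm i x hx ih =>
    obtain ⟨v, rfl⟩ := hm
    rw [map_mul, map_apply_ι]
    rw [pow_succ']
    exact Submodule.mul_mem_mul (LinearMap.mem_range_self _ (g v)) ih

lemma contract_map (g : M →ₗ[R] N) (φ : Module.Dual R N) {i : ℕ} {x : ExteriorAlgebra R M}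
    (hx : x ∈ (LinearMap.range (ι R : M →ₗ[R] ExteriorAlgebra R M)) ^ i) :
    CliffordAlgebra.contractLeft φ (map g x) =
      map g (CliffordAlgebra.contractLeft (φ.comp g) x) := by
  induction hx using Submodule.pow_induction_on_left' with
  | algebraMap r =>
    rw [AlgHom.commutes, contract_algebraMap, contract_algebraMap, map_zero]
  | add x y i hx hy ihx ihy => rw [map_add, map_add, map_add, ihx, ihy, map_add]
  | mem_mul m hm i x hx ih =>
    obtain ⟨v, rfl⟩ := hm
    rw [map_mul, map_apply_ι, contract_ι_mul, contract_ι_mul, map_sub, map_mul,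
      map_apply_ι, ih, map_smul]
    rfl

end Bridge

variable {k : ℕ}

/-- extension by zero -/
def jmap (R : Type*) [CommRing R] (k : ℕ) : (Fin k → R) →ₗ[R] (Fin (k + 1) → R) where
  toFun v := Fin.snoc v 0
  map_add' u v := funext fun i => by induction i using Fin.lastCases <;> simp
  map_smul' c v := funext fun i => by induction i using Fin.lastCases <;> simp

/-- restriction -/
def pmap (R : Type*) [CommRing R] (k : ℕ) : (Fin (k + 1) → R) →ₗ[R] (Fin k → R) :=
  LinearMap.funLeft R R Fin.castSucc

lemma pmap_jmap (v : Fin k → R) : pmap R k (jmap R k v) = v := by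
  funext i; simp [pmap, jmap, LinearMap.funLeft]

lemma φ_apply (f : Fin k → R) (v : Fin k → R) :
    (∑ i, f i • (LinearMap.proj i : (Fin k → R) →ₗ[R] R)) v = ∑ i, f i * v i := by
  simp [LinearMap.sum_apply, LinearMap.proj_apply]

lemma φ_comp_jmap (f : Fin (k + 1) → R) :
    (∑ i, f i • (LinearMap.proj i : (Fin (k + 1) → R) →ₗ[R] R)).comp (jmap R k)
      = ∑ i, (fun i => f (Fin.castSucc i)) i • (LinearMap.proj i : (Fin k → R) →ₗ[R] R) := by
  refine LinearMap.ext fun v => ?_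
  rw [LinearMap.comp_apply, φ_apply, φ_apply, Fin.sum_univ_castSucc]
  simp [jmap]

lemma φ_single_last (f : Fin (k + 1) → R) :
    (∑ i, f i • (LinearMap.proj i : (Fin (k + 1) → R) →ₗ[R] R)) (Pi.single (Fin.last k) 1)
      = f (Fin.last k) := by
  rw [φ_apply]
  simp [Pi.single_apply]

lemma proj_last_jmap :
    (LinearMap.proj (Fin.last k) : (Fin (k + 1) → R) →ₗ[R] R).comp (jmap R k) = 0 :=
  LinearMap.ext fun v => by simp [jmap]

lemma decomp_vec (v : Fin (k + 1) → R) :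
    v = jmap R k (fun i => v (Fin.castSucc i)) +
      v (Fin.last k) • (Pi.single (Fin.last k) 1 : Fin (k + 1) → R) := by
  funext i
  induction i using Fin.lastCases with
  | last => simp [jmap]
  | cast i => simp [jmap, Pi.single_apply, (Fin.castSucc_lt_last i).ne]

lemma jmap_injective : Function.Injective (map (jmap R k) :
    ExteriorAlgebra R (Fin k → R) → ExteriorAlgebra R (Fin (k + 1) → R)) := by
  have h : (map (pmap R k)).comp (map (jmap R k)) = AlgHom.id R _ := by
    rw [map_comp_map]
    rw [show (pmap R k) ∘ₗ (jmap R k) = LinearMap.id from LinearMap.ext pmap_jmap, map_id]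
  intro x y hxy
  have := congrArg (map (pmap R k)) hxy
  rwa [← AlgHom.comp_apply, ← AlgHom.comp_apply, h, AlgHom.id_apply, AlgHom.id_apply] at this

lemma part2 (f : Fin k → R) (r : R) :
    (∃ y ∈ (LinearMap.range (ι R : (Fin k → R) →ₗ[R] ExteriorAlgebra R (Fin k → R))) ^ 1,
        CliffordAlgebra.contractLeft (∑ i, f i • (LinearMap.proj i : (Fin k → R) →ₗ[R] R)) y
          = algebraMap R (ExteriorAlgebra R (Fin k → R)) r)
      ↔ r ∈ Ideal.span (Set.range f) := by
  constructor
  · rintro ⟨y, hy, hδ⟩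
    rw [pow_one] at hy
    obtain ⟨m, rfl⟩ := hy
    rw [contract_ι] at hδ
    have h := (ExteriorAlgebra.algebraMap_inj _ _ _).mp hδ
    rw [φ_apply] at h
    rw [← h]
    exact Submodule.sum_mem _ fun i _ =>
      mul_comm (f i) (m i) ▸ Ideal.mul_mem_left _ (m i) (Ideal.subset_span ⟨i, rfl⟩)
  · intro hr
    obtain ⟨c, hc⟩ := (Submodule.mem_span_range_iff_exists_fun R).mp hr
    refine ⟨ι R c, by rw [pow_one]; exact LinearMap.mem_range_self _ _, ?_⟩
    rw [contract_ι, φ_apply]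
    congr 1
    rw [← hc]
    exact Finset.sum_congr rfl fun i _ => mul_comm (f i) (c i)

open RingTheory.Sequence in
lemma reg_step (f : Fin (k + 1) → R) (h : IsWeaklyRegular R (List.ofFn f)) :
    IsWeaklyRegular R (List.ofFn fun i => f (Fin.castSucc i)) ∧
    ∀ r : R, f (Fin.last k) * r ∈ Ideal.span (Set.range fun i => f (Fin.castSucc i)) →
      r ∈ Ideal.span (Set.range fun i => f (Fin.castSucc i)) := by
  rw [List.ofFn_succ', List.concat_eq_append, isWeaklyRegular_append_iff] at h
  obtain ⟨h1, h2⟩ := h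
  refine ⟨h1, fun r hr => ?_⟩
  have hI : Ideal.ofList (List.ofFn fun i => f (Fin.castSucc i))
      = Ideal.span (Set.range fun i => f (Fin.castSucc i)) := by
    apply congrArg Ideal.span
    ext x
    exact List.mem_ofFn
  rw [isWeaklyRegular_singleton_iff] at h2
  have htop : (Ideal.ofList (List.ofFn fun i => f (Fin.castSucc i)) • ⊤ : Submodule R R)
      = Ideal.span (Set.range fun i => f (Fin.castSucc i)) := by rw [hI]; simp
  rw [htop] at h2
  have h0 : (Submodule.Quotient.mk (r : R) :
      R ⧸ (Ideal.span (Set.range fun i => f (Fin.castSucc i)) : Submodule R R)) = 0 := by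
    apply h2
    show f (Fin.last k) • (Submodule.Quotient.mk r) = f (Fin.last k) • (0 : _)
    rw [smul_zero, ← Submodule.Quotient.mk_smul, Submodule.Quotient.mk_eq_zero]
    simpa [smul_eq_mul] using hr
  rwa [Submodule.Quotient.mk_eq_zero] at h0

lemma mul_decomp_aux {M : Type*} [AddCommGroup M] [Module R M]
    (u w a b : ExteriorAlgebra R M) (c : R)
    (hww : w * w = 0) (huw : u * w = -(w * u)) :
    (u + c • w) * (a + w * b) = u * a + w * (c • a - u * b) := by
  rw [add_mul, mul_add, mul_add, smul_mul_assoc, smul_mul_assoc,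
    ← mul_assoc u w b, huw, ← mul_assoc w w b, hww, zero_mul, smul_zero, add_zero,
    mul_sub, mul_smul_comm, neg_mul, mul_assoc]
  abel

set_option maxHeartbeats 1000000 in
lemma decomp {i : ℕ} {x : ExteriorAlgebra R (Fin (k + 1) → R)}
    (hx : x ∈ (LinearMap.range
        (ι R : (Fin (k + 1) → R) →ₗ[R] ExteriorAlgebra R (Fin (k + 1) → R))) ^ i) :
    ∃ a ∈ (LinearMap.range (ι R : (Fin k → R) →ₗ[R] ExteriorAlgebra R (Fin k → R))) ^ i,
      ∃ b ∈ (LinearMap.range (ι R : (Fin k → R) →ₗ[R] ExteriorAlgebra R (Fin k → R))) ^ (i - 1),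
        (i = 0 → b = 0) ∧
          x = map (jmap R k) a +
            ι R (Pi.single (Fin.last k) 1 : Fin (k + 1) → R) * map (jmap R k) b := by
  induction hx using Submodule.pow_induction_on_left' with
  | algebraMap r =>
    refine ⟨algebraMap R _ r, Submodule.algebraMap_mem r, 0, zero_mem _, fun _ => rfl, ?_⟩
    rw [AlgHom.commutes, map_zero, mul_zero, add_zero]
  | add x y i hx hy ihx ihy =>
    obtain ⟨a₁, ha₁, b₁, hb₁, h01, rfl⟩ := ihx
    obtain ⟨a₂, ha₂, b₂, hb₂, h02, rfl⟩ := ihy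
    refine ⟨a₁ + a₂, add_mem ha₁ ha₂, b₁ + b₂, add_mem hb₁ hb₂,
      fun h => by rw [h01 h, h02 h, add_zero], ?_⟩
    rw [map_add, map_add, mul_add]
    abel
  | mem_mul m hm i x hx ih =>
    obtain ⟨v, rfl⟩ := hm
    obtain ⟨a, ha, b, hb, hb0, rfl⟩ := ih
    have hιv : ι R v = ι R (jmap R k (fun i => v (Fin.castSucc i)))
        + v (Fin.last k) • ι R (Pi.single (Fin.last k) 1 : Fin (k + 1) → R) := by
      conv_lhs => rw [decomp_vec v]
      rw [map_add, map_smul]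
    refine ⟨(ι R fun i => v (Fin.castSucc i)) * a, ?_,
      v (Fin.last k) • a - (ι R fun i => v (Fin.castSucc i)) * b, ?_,
      fun h => absurd h (Nat.succ_ne_zero i), ?_⟩
    · rw [pow_succ']
      exact Submodule.mul_mem_mul (LinearMap.mem_range_self _ _) ha
    · rw [Nat.succ_sub_one]
      refine sub_mem (Submodule.smul_mem _ _ ha) ?_
      match i, hb, hb0 with
      | 0, hb, hb0 => rw [hb0 rfl, mul_zero]; exact zero_mem _
      | j + 1, hb, _ =>
        rw [Nat.succ_sub_one] at hb
        rw [pow_succ']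
        exact Submodule.mul_mem_mul (LinearMap.mem_range_self _ _) hb
    · rw [hιv, mul_decomp_aux _ _ _ _ _ (ι_sq_zero _)
        (eq_neg_of_add_eq_zero_left (ι_add_mul_swap _ _))]
      simp only [map_sub, map_smul, map_mul, map_apply_ι]

set_option maxHeartbeats 1000000 in
lemma unique0 {ia ib : ℕ} {a b : ExteriorAlgebra R (Fin k → R)}
    (ha : a ∈ (LinearMap.range (ι R : (Fin k → R) →ₗ[R] ExteriorAlgebra R (Fin k → R))) ^ ia)
    (hb : b ∈ (LinearMap.range (ι R : (Fin k → R) →ₗ[R] ExteriorAlgebra R (Fin k → R))) ^ ib)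
    (h : map (jmap R k) a +
        ι R (Pi.single (Fin.last k) 1 : Fin (k + 1) → R) * map (jmap R k) b = 0) :
    a = 0 ∧ b = 0 := by
  have hkey : ∀ {n : ℕ} (z : ExteriorAlgebra R (Fin k → R)),
      z ∈ (LinearMap.range (ι R : (Fin k → R) →ₗ[R] ExteriorAlgebra R (Fin k → R))) ^ n →
      CliffordAlgebra.contractLeft
        (LinearMap.proj (Fin.last k) : (Fin (k + 1) → R) →ₗ[R] R) (map (jmap R k) z) = 0 := by
    intro n z hz
    rw [contract_map (jmap R k) _ hz, proj_last_jmap]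
    rw [map_zero CliffordAlgebra.contractLeft]
    simp
  have h2 := congrArg (CliffordAlgebra.contractLeft
    (LinearMap.proj (Fin.last k) : (Fin (k + 1) → R) →ₗ[R] R)) h
  rw [map_add, hkey _ ha, contract_ι_mul, hkey _ hb, mul_zero, sub_zero, zero_add,
    map_zero] at h2
  rw [LinearMap.proj_apply, Pi.single_eq_same, one_smul] at h2
  have hbz : b = 0 := jmap_injective (by rw [h2, map_zero])
  refine ⟨jmap_injective ?_, hbz⟩
  rw [map_zero]
  rw [hbz] at h
  rwa [map_zero, mul_zero, add_zero] at h

set_option maxHeartbeats 1000000 in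
lemma part1 : ∀ (k : ℕ) (f : Fin k → R),
    RingTheory.Sequence.IsWeaklyRegular R (List.ofFn f) →
    ∀ i : ℕ, 1 ≤ i →
    ∀ x ∈ (LinearMap.range (ι R : (Fin k → R) →ₗ[R] ExteriorAlgebra R (Fin k → R))) ^ i,
      CliffordAlgebra.contractLeft
        (∑ j, f j • (LinearMap.proj j : (Fin k → R) →ₗ[R] R)) x = 0 →
      ∃ y ∈ (LinearMap.range (ι R : (Fin k → R) →ₗ[R] ExteriorAlgebra R (Fin k → R))) ^ (i + 1),
        CliffordAlgebra.contractLeft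
          (∑ j, f j • (LinearMap.proj j : (Fin k → R) →ₗ[R] R)) y = x := by
  intro k
  induction k with
  | zero =>
    intro f _ i hi x hx _
    have hbot : (LinearMap.range (ι R : (Fin 0 → R) →ₗ[R] ExteriorAlgebra R (Fin 0 → R))) = ⊥ :=
      LinearMap.range_eq_bot.mpr (LinearMap.ext fun m => by
        rw [Subsingleton.elim m 0, map_zero]; rfl)
    obtain ⟨n, rfl⟩ : ∃ n, i = n + 1 := ⟨i - 1, by omega⟩
    rw [hbot, pow_succ, Submodule.mul_bot] at hx
    obtain rfl : x = (0 : _) := hx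
    exact ⟨0, zero_mem _, map_zero _⟩
  | succ k IH =>
    intro f hreg i hi x hx hδx
    obtain ⟨hreg', hlast⟩ := reg_step f hreg
    obtain ⟨n, rfl⟩ : ∃ n, i = n + 1 := ⟨i - 1, by omega⟩
    obtain ⟨a, ha, b, hb, -, rfl⟩ := decomp hx
    rw [Nat.succ_sub_one] at hb
    -- notation
    set f' : Fin k → R := fun i => f (Fin.castSucc i) with hf'
    have hφj : (∑ j, f j • (LinearMap.proj j : (Fin (k + 1) → R) →ₗ[R] R)).comp (jmap R k)
        = ∑ j, f' j • (LinearMap.proj j : (Fin k → R) →ₗ[R] R) := φ_comp_jmap f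
    have hkey : ∀ {m : ℕ} (z : ExteriorAlgebra R (Fin k → R)),
        z ∈ (LinearMap.range (ι R : (Fin k → R) →ₗ[R] ExteriorAlgebra R (Fin k → R))) ^ m →
        CliffordAlgebra.contractLeft
            (∑ j, f j • (LinearMap.proj j : (Fin (k + 1) → R) →ₗ[R] R)) (map (jmap R k) z)
          = map (jmap R k) (CliffordAlgebra.contractLeft
              (∑ j, f' j • (LinearMap.proj j : (Fin k → R) →ₗ[R] R)) z) := by
      intro m z hz
      rw [contract_map (jmap R k) _ hz, hφj]
    -- compute δ x
    have hδe : ∀ w : ExteriorAlgebra R (Fin (k + 1) → R),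
        CliffordAlgebra.contractLeft
            (∑ j, f j • (LinearMap.proj j : (Fin (k + 1) → R) →ₗ[R] R))
            (ι R (Pi.single (Fin.last k) 1 : Fin (k + 1) → R) * w)
          = f (Fin.last k) • w
            - ι R (Pi.single (Fin.last k) 1 : Fin (k + 1) → R) *
              CliffordAlgebra.contractLeft
                (∑ j, f j • (LinearMap.proj j : (Fin (k + 1) → R) →ₗ[R] R)) w := by
      intro w
      rw [contract_ι_mul, φ_single_last]
    have hδb : CliffordAlgebra.contractLeft
        (∑ j, f' j • (LinearMap.proj j : (Fin k → R) →ₗ[R] R)) b = 0 ∧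
        CliffordAlgebra.contractLeft
          (∑ j, f' j • (LinearMap.proj j : (Fin k → R) →ₗ[R] R)) a
            = -(f (Fin.last k) • b) := by
      rw [map_add, hkey a ha, hδe, hkey b hb] at hδx
      have hδx' : map (jmap R k) (CliffordAlgebra.contractLeft
              (∑ j, f' j • (LinearMap.proj j : (Fin k → R) →ₗ[R] R)) a
            + f (Fin.last k) • b)
          + ι R (Pi.single (Fin.last k) 1 : Fin (k + 1) → R) *
            map (jmap R k) (-(CliffordAlgebra.contractLeft
              (∑ j, f' j • (LinearMap.proj j : (Fin k → R) →ₗ[R] R)) b)) = 0 := by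
        rw [map_add, map_smul, map_neg, mul_neg]
        rw [← hδx]
        abel
      obtain ⟨h1, h2⟩ := unique0 (add_mem (contract_mem_pow _ ha)
        (Submodule.smul_mem _ _ hb)) (neg_mem (contract_mem_pow _ hb)) hδx'
      refine ⟨by simpa using h2, by linear_combination (norm := abel) h1⟩
    obtain ⟨hδb0, hδa⟩ := hδb
    -- find c with δ' c = b
    have hc : ∃ c ∈ (LinearMap.range
        (ι R : (Fin k → R) →ₗ[R] ExteriorAlgebra R (Fin k → R))) ^ (n + 1),
        CliffordAlgebra.contractLeft
          (∑ j, f' j • (LinearMap.proj j : (Fin k → R) →ₗ[R] R)) c = b := by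
      match n, hx, ha, hb, hδa with
      | 0, hx, ha, hb, hδa =>
        -- b is a scalar
        rw [pow_zero] at hb
        obtain ⟨r, rfl⟩ := Submodule.mem_one.mp hb
        rw [pow_one] at ha
        obtain ⟨m, rfl⟩ := ha
        rw [contract_ι, φ_apply] at hδa
        have hsm : -(f (Fin.last k) • algebraMap R (ExteriorAlgebra R (Fin k → R)) r)
            = algebraMap R (ExteriorAlgebra R (Fin k → R)) (-(f (Fin.last k) * r)) := by
          rw [map_neg, Algebra.smul_def, ← map_mul]
        rw [hsm] at hδa
        have h := (ExteriorAlgebra.algebraMap_inj _ _ _).mp hδa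
        have hmem : f (Fin.last k) * r ∈ Ideal.span (Set.range f') := by
          have : (∑ i, f' i * m i) ∈ Ideal.span (Set.range f') :=
            Submodule.sum_mem _ fun i _ =>
              mul_comm (f' i) (m i) ▸ Ideal.mul_mem_left _ (m i) (Ideal.subset_span ⟨i, rfl⟩)
          have h' : f (Fin.last k) * r = -(∑ i, f' i * m i) := by
            linear_combination h
          rw [h']
          exact neg_mem this
        have hr : r ∈ Ideal.span (Set.range f') := hlast r hmem
        obtain ⟨c, hc1, hc2⟩ := (part2 f' r).mpr hr
        rw [pow_one] at hc1
        exact ⟨c, by rw [pow_one]; exact hc1, hc2⟩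
      | j + 1, hx, ha, hb, hδa =>
        exact IH f' hreg' (j + 1) (Nat.le_add_left 1 j) b hb hδb0
    obtain ⟨c, hcmem, hδc⟩ := hc
    -- z = a + f_last • c is a cycle
    have hzmem : a + f (Fin.last k) • c ∈ (LinearMap.range
        (ι R : (Fin k → R) →ₗ[R] ExteriorAlgebra R (Fin k → R))) ^ (n + 1) :=
      add_mem ha (Submodule.smul_mem _ _ hcmem)
    have hzcyc : CliffordAlgebra.contractLeft
        (∑ j, f' j • (LinearMap.proj j : (Fin k → R) →ₗ[R] R))
          (a + f (Fin.last k) • c) = 0 := by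
      rw [map_add, map_smul, hδa, hδc]
      abel
    obtain ⟨d, hdmem, hδd⟩ := IH f' hreg' (n + 1) (Nat.le_add_left 1 n)
      (a + f (Fin.last k) • c) hzmem hzcyc
    -- final y
    refine ⟨map (jmap R k) d - ι R (Pi.single (Fin.last k) 1 : Fin (k + 1) → R)
      * map (jmap R k) c, ?_, ?_⟩
    · refine sub_mem (map_mem_pow _ hdmem) ?_
      rw [pow_succ']
      exact Submodule.mul_mem_mul (LinearMap.mem_range_self _ _) (map_mem_pow _ hcmem)
    · rw [map_sub, hkey d hdmem, hδd, hδe, hkey c hcmem, hδc]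
      rw [map_add, map_smul]
      abel

end KoszulStmt19

/-- if `f = (f₁,…,f_k)` is a regular sequence in a commutative ring `R`,
the Koszul complex `K•(f) = (Λ•(Rᵏ), δ_f)` is a resolution of `R/(f₁,…,f_k)`: it is
exact in every positive degree (every cycle of degree `i ≥ 1` is a boundary), and in
degree `0` the image of `δ_f` is exactly the ideal `(f₁,…,f_k)`, so that
`H₀ = R/(f₁,…,f_k)` and all other homology vanishes. -/
theorem koszul_complex_resolution_of_regular_sequence
    {R : Type*} [CommRing R] {k : ℕ} (f : Fin k → R)
    (hreg : RingTheory.Sequence.IsRegular R (List.ofFn f)) :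
    letI N := Fin k → R
    letI G : ℕ → Submodule R (ExteriorAlgebra R N) :=
      fun i => LinearMap.range (ExteriorAlgebra.ι R : N →ₗ[R] ExteriorAlgebra R N) ^ i
    letI φf : Module.Dual R N := ∑ i, f i • LinearMap.proj i
    letI δ : ExteriorAlgebra R N →ₗ[R] ExteriorAlgebra R N :=
      CliffordAlgebra.contractLeft φf
    (∀ i : ℕ, 1 ≤ i → ∀ x ∈ G i, δ x = 0 → ∃ y ∈ G (i + 1), δ y = x) ∧
      (∀ r : R,
        (∃ y ∈ G 1, δ y = algebraMap R (ExteriorAlgebra R N) r) ↔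
          r ∈ Ideal.span (Set.range f)) := by
  exact ⟨fun i hi x hx hδ => KoszulStmt19.part1 k f hreg.toIsWeaklyRegular i hi x hx hδ,
    fun r => KoszulStmt19.part2 f r⟩
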